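/- Let S(t) > 0, K > 0, σ > 0, T > 0, μ, r real, and let S(t+T) be lognormal with log S(t+T) ~ N(log S(t) + (μ − σ²/2)T, σ²T). Then e^{−rT}·E[max(0, S(t+T) − K)] = S(t)·e^{(μ−r)T}·Φ(α) − K·e^{−rT}·Φ(β), where α = (log(S(t)/K) + (μ + σ²/2)T)/(σ√T) and β = α − σ√T. -/

import Mathlib

open MeasureTheory ProbabilityTheory Real Set Filter

noncomputable def Φ (x : ℝ) : ℝ := ∫ t in Set.Iic x, Real.exp (-t^2/2) / Real.sqrt (2*Real.pi)

lemma gaussianPDFReal_zero_one (x : ℝ) :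
    gaussianPDFReal 0 1 x = Real.exp (-x^2/2) / Real.sqrt (2*Real.pi) := by
  simp only [gaussianPDFReal, NNReal.coe_one, mul_one, sub_zero]
  rw [div_eq_inv_mul]
  ring_nf

lemma Phi_eq (x : ℝ) : Φ x = (gaussianReal 0 1 (Set.Iic x)).toReal := by
  rw [gaussianReal_apply_eq_integral 0 one_ne_zero, ENNReal.toReal_ofReal]
  · simp only [Φ, gaussianPDFReal_zero_one]
  · exact integral_nonneg fun t => gaussianPDFReal_nonneg 0 1 t

lemma gauss_Ici_toReal (c : ℝ) : (gaussianReal 0 1 (Set.Ici c)).toReal = Φ (-c) := by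
  rw [Phi_eq]
  congr 1
  have hmap : (gaussianReal 0 1).map (fun x => (-1 : ℝ) * x) = gaussianReal 0 1 := by
    rw [gaussianReal_map_const_mul (-1 : ℝ)]
    norm_num
  conv_rhs => rw [← hmap]
  rw [Measure.map_apply (by fun_prop) measurableSet_Iic]
  congr 1
  ext z
  simp only [Set.mem_preimage, Set.mem_Iic, Set.mem_Ici]
  constructor <;> intro h <;> linarith

lemma gauss_shift (b c : ℝ) :
    (gaussianReal b 1 (Set.Ici c)) = gaussianReal 0 1 (Set.Ici (c - b)) := by
  have hmap : (gaussianReal 0 1).map (· + b) = gaussianReal b 1 := by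
    rw [gaussianReal_map_add_const b, zero_add]
  rw [← hmap, Measure.map_apply (by fun_prop) measurableSet_Ici]
  congr 1
  ext z
  simp only [Set.mem_preimage, Set.mem_Ici]
  constructor <;> intro h <;> linarith

lemma integral_pdf_Ici (m c : ℝ) :
    ∫ z in Set.Ici c, gaussianPDFReal m 1 z = (gaussianReal m 1 (Set.Ici c)).toReal := by
  rw [gaussianReal_apply_eq_integral m one_ne_zero, ENNReal.toReal_ofReal]
  exact integral_nonneg fun t => gaussianPDFReal_nonneg m 1 t

theorem stmt17 (S0 K σ T μ r : ℝ) (hS0 : 0 < S0) (hK : 0 < K) (hσ : 0 < σ) (hT : 0 < T) :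
    Real.exp (-r*T) *
        ∫ z, max 0 (S0 * Real.exp ((μ - σ^2/2)*T + σ * Real.sqrt T * z) - K) ∂(gaussianReal 0 1) =
      S0 * Real.exp ((μ - r)*T) *
          Φ ((Real.log (S0/K) + (μ + σ^2/2)*T) / (σ * Real.sqrt T)) -
        K * Real.exp (-r*T) *
          Φ ((Real.log (S0/K) + (μ + σ^2/2)*T) / (σ * Real.sqrt T) - σ * Real.sqrt T) := by
  set a : ℝ := (μ - σ^2/2)*T with ha
  set b : ℝ := σ * Real.sqrt T with hb
  have hsT : 0 < Real.sqrt T := Real.sqrt_pos.mpr hT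
  have hbpos : 0 < b := mul_pos hσ hsT
  have hb2 : b^2 = σ^2 * T := by
    rw [hb, mul_pow, Real.sq_sqrt hT.le]
  set c : ℝ := (Real.log (K/S0) - a)/b with hc
  -- Step 1: rewrite max as indicator
  have hmax : ∀ z : ℝ, max 0 (S0 * Real.exp (a + b * z) - K) =
      Set.indicator (Set.Ici c) (fun z => S0 * Real.exp (a + b * z) - K) z := by
    intro z
    by_cases hz : z ∈ Set.Ici c
    · rw [Set.indicator_of_mem hz]
      have hzc : c ≤ z := hz
      have : Real.log (K/S0) ≤ a + b * z := by
        have : b * c ≤ b * z := mul_le_mul_of_nonneg_left hzc hbpos.le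
        rw [hc] at this
        rw [mul_div_cancel₀ _ hbpos.ne'] at this
        linarith
      have hKS : K / S0 ≤ Real.exp (a + b * z) := by
        calc K / S0 = Real.exp (Real.log (K/S0)) := (Real.exp_log (div_pos hK hS0)).symm
        _ ≤ _ := Real.exp_le_exp.mpr this
      have : K ≤ S0 * Real.exp (a + b * z) := by
        rw [div_le_iff₀ hS0] at hKS
        linarith [hKS]
      exact max_eq_right (by linarith)
    · rw [Set.indicator_of_notMem hz]
      simp only [Set.mem_Ici, not_le] at hz
      have : a + b * z < Real.log (K/S0) := by
        have : b * z < b * c := mul_lt_mul_of_pos_left hz hbpos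
        rw [hc, mul_div_cancel₀ _ hbpos.ne'] at this
        linarith
      have hKS : Real.exp (a + b * z) < K / S0 := by
        calc Real.exp (a + b * z) < Real.exp (Real.log (K/S0)) := Real.exp_lt_exp.mpr this
        _ = K / S0 := Real.exp_log (div_pos hK hS0)
      have : S0 * Real.exp (a + b * z) < K := by
        rw [lt_div_iff₀ hS0] at hKS
        linarith [hKS]
      exact max_eq_left (by linarith)
  -- Step 2: compute the integral
  have hI : ∫ z, max 0 (S0 * Real.exp (a + b * z) - K) ∂(gaussianReal 0 1) =
      S0 * Real.exp (a + b^2/2) * Φ (b - c) - K * Φ (-c) := by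
    have h1 : ∫ z, max 0 (S0 * Real.exp (a + b * z) - K) ∂(gaussianReal 0 1) =
        ∫ z in Set.Ici c, (S0 * Real.exp (a + b * z) - K) ∂(gaussianReal 0 1) := by
      rw [← integral_indicator measurableSet_Ici]
      exact integral_congr_ae (Filter.Eventually.of_forall hmax)
    -- convert to Lebesgue integral with density
    have hdens : gaussianReal 0 1 =
        volume.withDensity (fun x => ((gaussianPDFReal 0 1 x).toNNReal : ENNReal)) := by
      rw [gaussianReal_of_var_ne_zero 0 one_ne_zero]
      rfl
    have h2 : ∫ z in Set.Ici c, (S0 * Real.exp (a + b * z) - K) ∂(gaussianReal 0 1) =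
        ∫ z in Set.Ici c, gaussianPDFReal 0 1 z * (S0 * Real.exp (a + b * z) - K) := by
      rw [hdens, setIntegral_withDensity_eq_setIntegral_smul
        ((measurable_gaussianPDFReal 0 1).real_toNNReal) _ measurableSet_Ici]
      refine setIntegral_congr_fun measurableSet_Ici fun z _ => ?_
      rw [NNReal.smul_def, Real.coe_toNNReal _ (gaussianPDFReal_nonneg 0 1 z)]
      rfl
    -- pointwise identity
    have hpt : ∀ z : ℝ, gaussianPDFReal 0 1 z * (S0 * Real.exp (a + b * z) - K) =
        S0 * Real.exp (a + b^2/2) * gaussianPDFReal b 1 z - K * gaussianPDFReal 0 1 z := by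
      intro z
      have e0 : gaussianPDFReal 0 1 z = Real.exp (-z^2/2) / Real.sqrt (2*Real.pi) :=
        gaussianPDFReal_zero_one z
      have eb : gaussianPDFReal b 1 z = Real.exp (-(z-b)^2/2) / Real.sqrt (2*Real.pi) := by
        simp only [gaussianPDFReal, NNReal.coe_one, mul_one]
        rw [div_eq_inv_mul]
        ring_nf
      rw [e0, eb]
      have key : Real.exp (-z^2/2) * Real.exp (a + b * z) =
          Real.exp (a + b^2/2) * Real.exp (-(z-b)^2/2) := by
        rw [← Real.exp_add, ← Real.exp_add]
        congr 1
        ring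
      linear_combination (S0 / Real.sqrt (2*Real.pi)) * key
    have hint1 : Integrable (fun z => S0 * Real.exp (a + b^2/2) * gaussianPDFReal b 1 z)
        (volume.restrict (Set.Ici c)) :=
      (((integrable_gaussianPDFReal b 1).const_mul _).restrict)
    have hint2 : Integrable (fun z => K * gaussianPDFReal 0 1 z)
        (volume.restrict (Set.Ici c)) :=
      (((integrable_gaussianPDFReal 0 1).const_mul _).restrict)
    rw [h1, h2]
    calc ∫ z in Set.Ici c, gaussianPDFReal 0 1 z * (S0 * Real.exp (a + b * z) - K)
        = ∫ z in Set.Ici c, (S0 * Real.exp (a + b^2/2) * gaussianPDFReal b 1 z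
            - K * gaussianPDFReal 0 1 z) :=
          setIntegral_congr_fun measurableSet_Ici fun z _ => hpt z
      _ = S0 * Real.exp (a + b^2/2) * (∫ z in Set.Ici c, gaussianPDFReal b 1 z)
            - K * (∫ z in Set.Ici c, gaussianPDFReal 0 1 z) := by
          rw [integral_sub hint1 hint2, integral_const_mul, integral_const_mul]
      _ = S0 * Real.exp (a + b^2/2) * Φ (b - c) - K * Φ (-c) := by
          rw [integral_pdf_Ici b c, integral_pdf_Ici 0 c, gauss_shift, gauss_Ici_toReal,
            gauss_Ici_toReal, neg_sub]
  -- Step 3: identify the arguments and finish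
  have hlog : Real.log (K/S0) = -Real.log (S0/K) := by
    rw [Real.log_div hK.ne' hS0.ne', Real.log_div hS0.ne' hK.ne']
    ring
  have hα : b - c = (Real.log (S0/K) + (μ + σ^2/2)*T) / b := by
    rw [hc, hlog]
    field_simp
    rw [ha]
    nlinarith [hb2]
  have hβ : -c = (Real.log (S0/K) + (μ + σ^2/2)*T) / b - b := by
    rw [hc, hlog]
    field_simp
    rw [ha]
    nlinarith [hb2]
  rw [hI, hα, hβ]
  have hexp : Real.exp (-r*T) * Real.exp (a + b^2/2) = Real.exp ((μ - r)*T) := by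
    rw [← Real.exp_add, ha, hb2]
    ring_nf
  linear_combination (S0 * Φ ((Real.log (S0/K) + (μ + σ^2/2)*T) / b)) * hexp
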